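/- Assume the supercritical exponential setting: b > 0, b < p ≤ 1, μ > 0, φ(s) = e^{−bs}, and set α = ρ − b. There exist constants C > c > 0, t₀ ≥ 1 and N₀ ≥ 1 (depending only on p, b, μ) such that for all integers N ≥ N₀ and 1 ≤ K ≤ N for which the matrix hypotheses below hold, and all t ≥ t₀: c·e^{αt} ≤ v_t ≤ C·e^{αt}, where v_t = μ·[ (√K/‖V^K‖₂)·t + Σ_{n≥1} (‖I_K·Aⁿ·1_N‖₂/‖V^K‖₂)·∫₀^t s·(t−s)^{n−1}·e^{−b(t−s)}/(n−1)! ds ]. -/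

import Mathlib

open Finset Matrix

noncomputable section

/-- The diagonal projection matrix `I_K`. -/
def projK (N K : ℕ) : Matrix (Fin N) (Fin N) ℝ :=
  Matrix.of fun i j => if i = j ∧ (i : ℕ) < K then 1 else 0

/-- Euclidean norm on `ℝ^N`. -/
def euclNorm {N : ℕ} (v : Fin N → ℝ) : ℝ := Real.sqrt (∑ i, v i ^ 2)

/-- `‖V^K‖₂` where `V^K = I_K·V`. -/
def normVK {N : ℕ} (K : ℕ) (V : Fin N → ℝ) : ℝ :=
  euclNorm (fun i : Fin N => if (i : ℕ) < K then V i else 0)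

/-- `v_t = μ·[(√K/‖V^K‖₂)·t
  + Σ_{n≥1} (‖I_K·Aⁿ·1_N‖₂/‖V^K‖₂)·∫₀^t s·(t−s)^{n−1}·e^{−b(t−s)}/(n−1)! ds]`,
the series being indexed here by `n+1`, `n ∈ ℕ`. -/
def vt {N : ℕ} (K : ℕ) (μ b : ℝ) (A : Matrix (Fin N) (Fin N) ℝ) (V : Fin N → ℝ)
    (t : ℝ) : ℝ :=
  μ * ((Real.sqrt K / normVK K V) * t
    + ∑' n : ℕ,
        (euclNorm ((projK N K * A ^ (n + 1)).mulVec fun _ => (1 : ℝ)) / normVK K V)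
          * ∫ s in (0 : ℝ)..t, s * ((t - s) ^ n * Real.exp (-(b * (t - s))) / (n.factorial : ℝ)))

open MeasureTheory intervalIntegral

/- ### auxiliary lemmas -/

lemma aux_exp_tsum (x : ℝ) : ∑' n : ℕ, x ^ n / n.factorial = Real.exp x := by
  rw [Real.exp_eq_exp_ℝ, NormedSpace.exp_eq_tsum_div]

lemma aux_key_interchange (ρ b t : ℝ) (hρ : 0 ≤ ρ) (hb : 0 ≤ b) (ht : 0 ≤ t) :
    ∑' n : ℕ, ρ ^ (n+1) * ∫ s in (0:ℝ)..t,
        s * ((t - s) ^ n * Real.exp (-(b * (t - s))) / (n.factorial : ℝ))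
      = ρ * ∫ s in (0:ℝ)..t, s * Real.exp ((ρ - b) * (t - s)) := by
  set f : ℕ → ℝ → ℝ := fun n s =>
    ρ ^ (n+1) * (s * ((t - s) ^ n * Real.exp (-(b * (t - s))) / (n.factorial : ℝ))) with hf
  have hpt : ∀ s : ℝ, ∑' n : ℕ, f n s = ρ * (s * Real.exp ((ρ - b) * (t - s))) := by
    intro s
    have h1 : ∀ n : ℕ, f n s
        = (ρ * s * Real.exp (-(b * (t - s)))) * ((ρ * (t - s)) ^ n / (n.factorial : ℝ)) := by
      intro n; simp only [hf, mul_pow, pow_succ]; ring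
    have harg : -(b * (t - s)) + ρ * (t - s) = (ρ - b) * (t - s) := by ring
    rw [tsum_congr h1, tsum_mul_left, aux_exp_tsum, mul_assoc, ← Real.exp_add, harg]
    ring
  have hmeas : ∀ n : ℕ, AEStronglyMeasurable (f n) (volume.restrict (Set.Ioc (0:ℝ) t)) := by
    intro n
    apply Continuous.aestronglyMeasurable
    fun_prop
  have hboundpt : ∀ n : ℕ, ∀ s ∈ Set.Ioc (0:ℝ) t,
      ‖f n s‖ ≤ (ρ*t) * ((ρ*t)^n / (n.factorial : ℝ)) := by
    intro n s hs
    obtain ⟨hs0, hst⟩ := hs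
    have hts : 0 ≤ t - s := by linarith
    have h1 : 0 ≤ f n s := by
      apply mul_nonneg (by positivity)
      apply mul_nonneg hs0.le
      apply div_nonneg (mul_nonneg (by positivity) (Real.exp_pos _).le) (by positivity)
    rw [Real.norm_eq_abs, abs_of_nonneg h1]
    have h2 : f n s ≤ ρ ^ (n+1) * (t * (t ^ n * 1 / (n.factorial : ℝ))) := by
      simp only [hf]
      gcongr <;> first
        | linarith
        | exact Real.exp_le_one_iff.mpr (by nlinarith)
    calc f n s ≤ ρ ^ (n+1) * (t * (t ^ n * 1 / (n.factorial : ℝ))) := h2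
      _ = (ρ*t) * ((ρ*t)^n / (n.factorial : ℝ)) := by rw [mul_pow]; ring
  have hsum : Summable (fun n : ℕ => (ρ*t) * ((ρ*t)^n / (n.factorial : ℝ))) :=
    (Real.summable_pow_div_factorial (ρ*t)).mul_left _
  have hbound : ∑' n : ℕ, ∫⁻ s in Set.Ioc (0:ℝ) t, ‖f n s‖₊ ≠ ⊤ := by
    have hle : ∀ n : ℕ, (∫⁻ s in Set.Ioc (0:ℝ) t, ‖f n s‖₊)
        ≤ ENNReal.ofReal ((ρ*t) * ((ρ*t)^n / (n.factorial : ℝ))) * ENNReal.ofReal t := by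
      intro n
      calc (∫⁻ s in Set.Ioc (0:ℝ) t, ‖f n s‖₊)
          ≤ ∫⁻ s in Set.Ioc (0:ℝ) t, ENNReal.ofReal ((ρ*t) * ((ρ*t)^n / (n.factorial : ℝ))) := by
            apply setLIntegral_mono measurable_const
            intro s hs
            rw [← enorm_eq_nnnorm, ← ofReal_norm]
            exact ENNReal.ofReal_le_ofReal (hboundpt n s hs)
        _ = ENNReal.ofReal ((ρ*t) * ((ρ*t)^n / (n.factorial : ℝ))) * volume (Set.Ioc (0:ℝ) t) := by
            rw [setLIntegral_const]
        _ = _ := by rw [Real.volume_Ioc, sub_zero]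
    apply ne_top_of_le_ne_top _ (ENNReal.tsum_le_tsum hle)
    rw [ENNReal.tsum_mul_right, ← ENNReal.ofReal_tsum_of_nonneg (fun n => by positivity) hsum]
    exact ENNReal.mul_ne_top ENNReal.ofReal_ne_top ENNReal.ofReal_ne_top
  calc ∑' n : ℕ, ρ ^ (n+1) * ∫ s in (0:ℝ)..t,
        s * ((t - s) ^ n * Real.exp (-(b * (t - s))) / (n.factorial : ℝ))
      = ∑' n : ℕ, ∫ s in Set.Ioc (0:ℝ) t, f n s := by
        apply tsum_congr; intro n
        rw [integral_of_le ht, ← MeasureTheory.integral_const_mul]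
    _ = ∫ s in Set.Ioc (0:ℝ) t, ∑' n : ℕ, f n s := (MeasureTheory.integral_tsum hmeas hbound).symm
    _ = ∫ s in Set.Ioc (0:ℝ) t, ρ * (s * Real.exp ((ρ - b) * (t - s))) := by
        apply MeasureTheory.integral_congr_ae; filter_upwards with s; rw [hpt]
    _ = ρ * ∫ s in (0:ℝ)..t, s * Real.exp ((ρ - b) * (t - s)) := by
        rw [integral_of_le ht, ← MeasureTheory.integral_const_mul]

lemma aux_projK_mulVec (N K : ℕ) (w : Fin N → ℝ) :
    (projK N K).mulVec w = fun i : Fin N => if (i : ℕ) < K then w i else 0 := by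
  funext i
  simp only [projK, Matrix.mulVec, dotProduct, Matrix.of_apply]
  by_cases hi : (i : ℕ) < K
  · simp only [hi, and_true]
    rw [Finset.sum_eq_single i]
    · simp
    · intro j _ hj; simp [Ne.symm hj, fun h : i = j => hj h.symm]
    · simp
  · simp [hi]

lemma aux_pow_entry_nonneg {N : ℕ} (A : Matrix (Fin N) (Fin N) ℝ)
    (hA : ∀ i j, 0 ≤ A i j) (m : ℕ) (hm : 1 ≤ m) : ∀ i j, 0 ≤ (A ^ m) i j := by
  induction m with
  | zero => omega
  | succ m ih =>
    rcases Nat.eq_or_lt_of_le hm with h | h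
    · simpa [← h, pow_one] using hA
    · intro i j
      rw [pow_succ, Matrix.mul_apply]
      exact Finset.sum_nonneg fun k _ => mul_nonneg (ih (by omega) i k) (hA k j)

lemma aux_mulVec_mono {N : ℕ} (B : Matrix (Fin N) (Fin N) ℝ) (hB : ∀ i j, 0 ≤ B i j)
    (x y : Fin N → ℝ) (h : ∀ i, x i ≤ y i) : ∀ i, B.mulVec x i ≤ B.mulVec y i := by
  intro i
  simp only [Matrix.mulVec, dotProduct]
  apply Finset.sum_le_sum
  intro j _
  exact mul_le_mul_of_nonneg_left (h j) (hB i j)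

lemma aux_mulVec_pow_eigen {N : ℕ} (A : Matrix (Fin N) (Fin N) ℝ) (V : Fin N → ℝ) (ρ : ℝ)
    (h : A.mulVec V = ρ • V) (m : ℕ) : (A ^ m).mulVec V = (ρ ^ m) • V := by
  induction m with
  | zero => simp [Matrix.one_mulVec]
  | succ m ih =>
    rw [pow_succ, ← Matrix.mulVec_mulVec, h, Matrix.mulVec_smul, ih, smul_smul, pow_succ]
    ring_nf

lemma aux_euclNorm_mono {N : ℕ} (u v : Fin N → ℝ) (hu : ∀ i, 0 ≤ u i) (h : ∀ i, u i ≤ v i) :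
    euclNorm u ≤ euclNorm v := by
  apply Real.sqrt_le_sqrt
  exact Finset.sum_le_sum fun i _ => pow_le_pow_left₀ (hu i) (h i) 2

lemma aux_euclNorm_smul {N : ℕ} (c : ℝ) (hc : 0 ≤ c) (v : Fin N → ℝ) :
    euclNorm (fun i => c * v i) = c * euclNorm v := by
  simp only [euclNorm, mul_pow]
  rw [← Finset.mul_sum, Real.sqrt_mul (by positivity), Real.sqrt_sq hc]

lemma aux_card_filter_lt (N K : ℕ) (hKN : K ≤ N) :
    (Finset.univ.filter fun i : Fin N => (i : ℕ) < K).card = K := by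
  have h : (Finset.univ.filter fun i : Fin N => (i : ℕ) < K)
      = Finset.map ⟨Fin.castLE hKN, Fin.castLE_injective hKN⟩ Finset.univ := by
    ext a
    simp only [Finset.mem_filter, Finset.mem_univ, true_and, Finset.mem_map,
      Function.Embedding.coeFn_mk]
    constructor
    · intro ha; exact ⟨⟨a, ha⟩, by simp [Fin.castLE]⟩
    · rintro ⟨c, rfl⟩; simpa using c.isLt
  rw [h, Finset.card_map, Finset.card_univ, Fintype.card_fin]

lemma aux_integral_exp_c (c t : ℝ) (hc : c ≠ 0) :
    ∫ s in (0:ℝ)..t, Real.exp (c * s) = (Real.exp (c * t) - 1) / c := by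
  have h : ∀ x ∈ Set.uIcc (0:ℝ) t, HasDerivAt (fun s => Real.exp (c * s) / c)
      (Real.exp (c * x)) x := by
    intro x _
    have := ((Real.hasDerivAt_exp (c * x)).comp x ((hasDerivAt_id x).const_mul c))
    simpa [mul_comm, mul_div_assoc, mul_div_cancel_left₀ _ hc] using this.div_const c
  rw [intervalIntegral.integral_eq_sub_of_hasDerivAt h
    ((Real.continuous_exp.comp (continuous_const.mul continuous_id)).intervalIntegrable _ _)]
  simp [sub_div]

lemma aux_J_nonneg (α t : ℝ) (ht : 0 ≤ t) :
    0 ≤ ∫ s in (0:ℝ)..t, s * Real.exp (α * (t - s)) := by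
  apply intervalIntegral.integral_nonneg ht
  intro s hs
  exact mul_nonneg hs.1 (Real.exp_pos _).le

lemma aux_J_upper (a₁ α t : ℝ) (ha₁ : 0 < a₁) (hα : a₁ ≤ α) (ht : 0 ≤ t) :
    ∫ s in (0:ℝ)..t, s * Real.exp (α * (t - s)) ≤ 4 / a₁ ^ 2 * Real.exp (α * t) := by
  set c := α - a₁ / 2 with hcdef
  have hc0 : 0 < c := by simp only [hcdef]; linarith
  have hpt : ∀ s ∈ Set.Icc (0:ℝ) t, s * Real.exp (α * (t - s))
      ≤ (2 / a₁ * Real.exp (α * t)) * Real.exp (-c * s) := by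
    intro s hs
    have hs0 := hs.1
    have hsle : s ≤ 2 / a₁ * Real.exp (a₁ / 2 * s) := by
      have h := Real.add_one_le_exp (a₁ / 2 * s)
      have h2 : a₁ / 2 * s ≤ Real.exp (a₁ / 2 * s) := by linarith
      calc s = 2 / a₁ * (a₁ / 2 * s) := by field_simp
        _ ≤ 2 / a₁ * Real.exp (a₁ / 2 * s) := mul_le_mul_of_nonneg_left h2 (by positivity)
    calc s * Real.exp (α * (t - s))
        ≤ (2 / a₁ * Real.exp (a₁ / 2 * s)) * Real.exp (α * (t - s)) :=
          mul_le_mul_of_nonneg_right hsle (Real.exp_pos _).le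
      _ = (2 / a₁ * Real.exp (α * t)) * Real.exp (-c * s) := by
          rw [mul_assoc, ← Real.exp_add, mul_assoc, ← Real.exp_add]
          congr 2
          simp only [hcdef]; ring
  have hint : (∫ s in (0:ℝ)..t, s * Real.exp (α * (t - s)))
      ≤ ∫ s in (0:ℝ)..t, (2 / a₁ * Real.exp (α * t)) * Real.exp (-c * s) := by
    apply intervalIntegral.integral_mono_on ht _ _ hpt
    · exact (Continuous.intervalIntegrable (by fun_prop) _ _)
    · exact (Continuous.intervalIntegrable (by fun_prop) _ _)
  rw [intervalIntegral.integral_const_mul, aux_integral_exp_c (-c) t (by linarith)] at hint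
  have h2 : (Real.exp (-c * t) - 1) / (-c) ≤ 2 / a₁ := by
    rw [div_le_iff_of_neg (by linarith)]
    have h3 : 0 < Real.exp (-c * t) := Real.exp_pos _
    have h4 : (1:ℝ) ≤ 2 / a₁ * c := by
      rw [div_mul_eq_mul_div, le_div_iff₀ ha₁]
      simp only [hcdef]; nlinarith
    nlinarith
  calc (∫ s in (0:ℝ)..t, s * Real.exp (α * (t - s)))
      ≤ 2 / a₁ * Real.exp (α * t) * ((Real.exp (-c * t) - 1) / (-c)) := hint
    _ ≤ 2 / a₁ * Real.exp (α * t) * (2 / a₁) := by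
        apply mul_le_mul_of_nonneg_left h2 (by positivity)
    _ = 4 / a₁ ^ 2 * Real.exp (α * t) := by ring

lemma aux_J_lower (α t : ℝ) (hα0 : 0 ≤ α) (hα2 : α ≤ 2) (ht : 1 ≤ t) :
    Real.exp (-2) / 4 * Real.exp (α * t) ≤ ∫ s in (0:ℝ)..t, s * Real.exp (α * (t - s)) := by
  have ht0 : (0:ℝ) ≤ t := by linarith
  have hsub : (∫ s in (1/2:ℝ)..1, s * Real.exp (α * (t - s)))
      ≤ ∫ s in (0:ℝ)..t, s * Real.exp (α * (t - s)) := by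
    apply intervalIntegral.integral_mono_interval (μ := volume) (by norm_num) (by norm_num) ht
    · rw [Filter.EventuallyLE, ae_restrict_iff' measurableSet_Ioc]
      filter_upwards with s hs
      exact mul_nonneg hs.1.le (Real.exp_pos _).le
    · exact (Continuous.intervalIntegrable (by fun_prop) _ _)
  have hconst : (1/4 : ℝ) * Real.exp (α * (t - 1))
      ≤ ∫ s in (1/2:ℝ)..1, s * Real.exp (α * (t - s)) := by
    have h := intervalIntegral.integral_mono_on (μ := volume) (a := (1/2:ℝ)) (b := 1)
      (f := fun _ => (1/2 : ℝ) * Real.exp (α * (t - 1)))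
      (g := fun s => s * Real.exp (α * (t - s))) (by norm_num)
      (intervalIntegrable_const) (Continuous.intervalIntegrable (by fun_prop) _ _) ?_
    · rwa [intervalIntegral.integral_const, smul_eq_mul, show ((1:ℝ) - 1/2) = 1/2 by norm_num,
        ← mul_assoc, show ((1:ℝ)/2 * (1/2)) = 1/4 by norm_num] at h
    · intro s hs
      apply mul_le_mul hs.1 _ (Real.exp_pos _).le (by linarith [hs.1])
      apply Real.exp_le_exp.mpr
      apply mul_le_mul_of_nonneg_left _ hα0
      linarith [hs.2]
  have hexp : Real.exp (-2) / 4 * Real.exp (α * t) ≤ 1/4 * Real.exp (α * (t - 1)) := by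
    have h1 : Real.exp (-2) * Real.exp (α * t) ≤ Real.exp (α * (t - 1)) := by
      rw [← Real.exp_add]
      apply Real.exp_le_exp.mpr
      nlinarith
    linarith
  linarith

lemma aux_I_nonneg (b t : ℝ) (ht : 0 ≤ t) (n : ℕ) :
    0 ≤ ∫ s in (0:ℝ)..t, s * ((t - s) ^ n * Real.exp (-(b * (t - s))) / (n.factorial : ℝ)) := by
  apply intervalIntegral.integral_nonneg ht
  intro s hs
  have h1 : 0 ≤ t - s := by linarith [hs.2]
  apply mul_nonneg hs.1
  apply div_nonneg (mul_nonneg (pow_nonneg h1 n) (Real.exp_pos _).le) (by positivity)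

lemma aux_I_le (b t : ℝ) (hb : 0 ≤ b) (ht : 0 ≤ t) (n : ℕ) :
    (∫ s in (0:ℝ)..t, s * ((t - s) ^ n * Real.exp (-(b * (t - s))) / (n.factorial : ℝ)))
      ≤ t * (t * (t ^ n / (n.factorial : ℝ))) := by
  have h := intervalIntegral.integral_mono_on (μ := volume) (a := (0:ℝ)) (b := t)
    (f := fun s => s * ((t - s) ^ n * Real.exp (-(b * (t - s))) / (n.factorial : ℝ)))
    (g := fun _ => t * (t ^ n / (n.factorial : ℝ))) ht
    (Continuous.intervalIntegrable (by fun_prop) _ _) intervalIntegrable_const ?_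
  · rwa [intervalIntegral.integral_const, smul_eq_mul, sub_zero] at h
  · intro s hs
    have h1 : 0 ≤ t - s := by linarith [hs.2]
    have h2 : t - s ≤ t := by linarith [hs.1]
    calc s * ((t - s) ^ n * Real.exp (-(b * (t - s))) / (n.factorial : ℝ))
        ≤ t * (t ^ n * 1 / (n.factorial : ℝ)) := by
          gcongr <;> first
            | linarith [hs.1, hs.2]
            | exact Real.exp_le_one_iff.mpr (by nlinarith)
      _ = t * (t ^ n / (n.factorial : ℝ)) := by ring

lemma aux_Vratio (p δ ρ m x : ℝ) (hp0 : 0 < p) (hδ0 : 0 < δ) (hδ100 : δ ≤ 1/100)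
    (hρl : p * (1 - δ) ≤ ρ) (hρu : ρ ≤ p * (1 + δ)) (hρ0 : 0 < ρ)
    (hm0 : 0 < m) (hx0 : 0 < x)
    (hup : (ρ*ρ) * x ≤ p^2*(1+δ) * m) (hlo : p^2*(1-δ) * m ≤ (ρ*ρ) * x) :
    (3/4) * m ≤ x ∧ x ≤ (4/3) * m := by
  have hpd0 : (0:ℝ) ≤ p * (1 - δ) := mul_nonneg hp0.le (by linarith)
  have hρsq_lb : p^2*(1-δ)^2 ≤ ρ*ρ := by
    nlinarith [mul_le_mul hρl hρl hpd0 hρ0.le]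
  have hρsq_ub : ρ*ρ ≤ p^2*(1+δ)^2 := by
    nlinarith [mul_le_mul hρu hρu hρ0.le (by positivity : (0:ℝ) ≤ p * (1 + δ))]
  have hq : 0 < p^2*(1-δ)^2 := by nlinarith [sq_nonneg p, hp0, hδ100]
  have hq2 : 0 < p^2*(1+δ)^2 := by positivity
  constructor
  · have h6 : (ρ*ρ) * x ≤ p^2*(1+δ)^2 * x :=
      mul_le_mul_of_nonneg_right hρsq_ub hx0.le
    have h8 : 0 ≤ (1-δ) - (3/4)*(1+δ)^2 := by nlinarith
    have h7 : (3/4) * (p^2*(1+δ)^2) * m ≤ p^2*(1-δ) * m := by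
      nlinarith [mul_nonneg (mul_nonneg (sq_nonneg p) hm0.le) h8]
    have h10 : p^2*(1+δ)^2 * ((3/4)*m) ≤ p^2*(1+δ)^2 * x := by linarith [h7, hlo, h6]
    exact le_of_mul_le_mul_left h10 hq2
  · have h6 : p^2*(1-δ)^2 * x ≤ (ρ*ρ) * x :=
      mul_le_mul_of_nonneg_right hρsq_lb hx0.le
    have h8 : 0 ≤ (4/3)*(1-δ)^2 - (1+δ) := by nlinarith
    have h7 : p^2*(1+δ) * m ≤ (4/3) * (p^2*(1-δ)^2) * m := by
      nlinarith [mul_nonneg (mul_nonneg (sq_nonneg p) hm0.le) h8]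
    have h10 : p^2*(1-δ)^2 * x ≤ p^2*(1-δ)^2 * ((4/3)*m) := by linarith [h6, hup, h7]
    exact le_of_mul_le_mul_left h10 hq

lemma aux_m_lb (Nr m : ℝ) (hN : 0 < Nr) (hm0 : 0 < m)
    (h1 : Nr ≤ Nr * ((4/3)*m)^2) : 3/4 ≤ m := by
  have h3 : (1:ℝ) ≤ ((4/3)*m)^2 := by nlinarith
  nlinarith

lemma aux_m_ub (Nr m : ℝ) (hN : 0 < Nr) (hm0 : 0 < m)
    (h1 : Nr * ((3/4)*m)^2 ≤ Nr) : m ≤ 4/3 := by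
  have h3 : ((3/4)*m)^2 ≤ (1:ℝ) := by nlinarith
  nlinarith

lemma aux_sq_lb (y : ℝ) (hy : 1/2 ≤ y) : 1/4 ≤ y^2 := by nlinarith

lemma aux_assemble (μ p a₁ ρ b t T1 : ℝ) (R I : ℕ → ℝ)
    (hμ : 0 < μ) (ha₁ : 0 < a₁) (hρ0 : 0 < ρ)
    (hρp2 : p/2 ≤ ρ) (hρ2 : ρ ≤ 2) (hα1 : a₁ ≤ ρ - b) (hα2 : ρ - b ≤ 2) (ht : 1 ≤ t)
    (hT1l : 0 ≤ T1) (hT1u : T1 ≤ 2 * t)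
    (hI0 : ∀ n, 0 ≤ I n)
    (hIle : ∀ n, I n ≤ t * (t * (t ^ n / (n.factorial : ℝ))))
    (hr : ∀ n, (1/2) * ρ^(n+1) ≤ R n ∧ R n ≤ 2 * ρ^(n+1))
    (hkey : ∑' n : ℕ, ρ^(n+1) * I n = ρ * ∫ s in (0:ℝ)..t, s * Real.exp ((ρ - b) * (t - s))) :
    μ * p * Real.exp (-2) / 16 * Real.exp ((ρ - b) * t) ≤ μ * (T1 + ∑' n : ℕ, R n * I n) ∧
    μ * (T1 + ∑' n : ℕ, R n * I n) ≤ μ * (4 / a₁ + 16 / a₁ ^ 2) * Real.exp ((ρ - b) * t) := by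
  have ht0 : (0:ℝ) ≤ t := by linarith
  have hα0 : 0 < ρ - b := lt_of_lt_of_le ha₁ hα1
  set J : ℝ := ∫ s in (0:ℝ)..t, s * Real.exp ((ρ - b) * (t - s)) with hJdef
  have hJ0 : 0 ≤ J := aux_J_nonneg _ _ ht0
  have hJu : J ≤ 4 / a₁^2 * Real.exp ((ρ - b) * t) := aux_J_upper a₁ _ t ha₁ hα1 ht0
  have hJl : Real.exp (-2)/4 * Real.exp ((ρ - b)*t) ≤ J := aux_J_lower _ t hα0.le hα2 ht
  have hSa : Summable (fun n : ℕ => ρ^(n+1) * I n) := by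
    apply Summable.of_nonneg_of_le (fun n => mul_nonneg (pow_nonneg hρ0.le _) (hI0 n))
      (fun n => ?_) ((Real.summable_pow_div_factorial (ρ*t)).mul_left (ρ*t*t))
    calc ρ^(n+1) * I n ≤ ρ^(n+1) * (t*(t*(t^n/(n.factorial:ℝ)))) :=
        mul_le_mul_of_nonneg_left (hIle n) (pow_nonneg hρ0.le _)
      _ = ρ*t*t*((ρ*t)^n/(n.factorial:ℝ)) := by rw [mul_pow, pow_succ]; ring
  have hS2 : Summable (fun n : ℕ => 2 * (ρ^(n+1) * I n)) := hSa.mul_left 2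
  have hS1 : Summable (fun n : ℕ => (1/2) * (ρ^(n+1) * I n)) := hSa.mul_left (1/2)
  have hSr : Summable (fun n : ℕ => R n * I n) := by
    apply Summable.of_nonneg_of_le
      (fun n => mul_nonneg
        (le_trans (mul_nonneg (by norm_num) (pow_nonneg hρ0.le _)) (hr n).1) (hI0 n))
      (fun n => le_trans (mul_le_mul_of_nonneg_right (hr n).2 (hI0 n)) (le_of_eq (by ring))) hS2
  have hT2u : (∑' n : ℕ, R n * I n) ≤ 2 * (ρ * J) := by
    calc (∑' n : ℕ, R n * I n) ≤ ∑' n : ℕ, 2*(ρ^(n+1) * I n) :=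
        Summable.tsum_le_tsum (fun n => le_trans (mul_le_mul_of_nonneg_right (hr n).2 (hI0 n))
          (le_of_eq (by ring))) hSr hS2
      _ = 2 * ∑' n : ℕ, ρ^(n+1) * I n := tsum_mul_left
      _ = 2 * (ρ * J) := by rw [hkey]
  have hT2l : (1/2) * (ρ * J) ≤ ∑' n : ℕ, R n * I n := by
    calc (1/2)*(ρ*J) = (1/2) * ∑' n : ℕ, ρ^(n+1)*I n := by rw [hkey]
      _ = ∑' n : ℕ, (1/2)*(ρ^(n+1)*I n) := tsum_mul_left.symm
      _ ≤ ∑' n : ℕ, R n * I n :=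
        Summable.tsum_le_tsum (fun n => le_trans (le_of_eq (by ring))
          (mul_le_mul_of_nonneg_right (hr n).1 (hI0 n))) hS1 hSr
  constructor
  · have h1 : p/2 * (Real.exp (-2)/4 * Real.exp ((ρ-b)*t)) ≤ ρ * J :=
      mul_le_mul hρp2 hJl (by positivity) hρ0.le
    have h2 : μ * p * Real.exp (-2) / 16 * Real.exp ((ρ-b)*t)
        = μ * ((1/2) * (p/2 * (Real.exp (-2)/4 * Real.exp ((ρ-b)*t)))) := by ring
    rw [h2]
    apply mul_le_mul_of_nonneg_left _ hμ.le
    nlinarith [hT2l, hT1l, h1]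
  · have htexp : t ≤ Real.exp ((ρ-b)*t) / a₁ := by
      rw [le_div_iff₀ ha₁]
      have h := Real.add_one_le_exp (a₁*t)
      have h2 : Real.exp (a₁*t) ≤ Real.exp ((ρ-b)*t) := Real.exp_le_exp.mpr (by nlinarith)
      nlinarith
    have h4 : T1 + (∑' n : ℕ, R n * I n) ≤ (4/a₁ + 16/a₁^2) * Real.exp ((ρ-b)*t) := by
      have h5 : ρ * J ≤ 2 * (4/a₁^2 * Real.exp ((ρ-b)*t)) := by
        nlinarith [mul_le_mul_of_nonneg_right hρ2 hJ0,
          mul_le_mul_of_nonneg_left hJu (by norm_num : (0:ℝ) ≤ 2)]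
      have h6 : T1 ≤ 2 * (Real.exp ((ρ-b)*t)/a₁) := by linarith
      have h7 : (4/a₁ + 16/a₁^2) * Real.exp ((ρ-b)*t)
          = 2 * (Real.exp ((ρ-b)*t)/a₁) + 2*(2*(4/a₁^2 * Real.exp ((ρ-b)*t)))
            + (2/a₁) * Real.exp ((ρ-b)*t) := by
        field_simp
        ring
      have h8 : 0 ≤ (2/a₁) * Real.exp ((ρ-b)*t) := by positivity
      linarith [hT2u]
    calc μ * (T1 + ∑' n : ℕ, R n * I n) ≤ μ * ((4/a₁ + 16/a₁^2) * Real.exp ((ρ-b)*t)) :=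
        mul_le_mul_of_nonneg_left h4 hμ.le
      _ = μ * (4/a₁ + 16/a₁^2) * Real.exp ((ρ-b)*t) := by ring

set_option maxHeartbeats 2000000 in
/-- in the supercritical exponential setting (`0 < b < p ≤ 1`, `μ > 0`,
`φ(s) = e^{−bs}`, `α = ρ − b`), there are `C > c > 0`, `t₀ ≥ 1` and `N₀ ≥ 1` such that for
`N ≥ N₀`, `1 ≤ K ≤ N`, matrices satisfying the conditions of `Ω_N^{K,2}`, and all `t ≥ t₀`:
`c·e^{αt} ≤ v_t ≤ C·e^{αt}`. -/
theorem stmt_11 (p b μ : ℝ) (hb : 0 < b) (hbp : b < p) (hp1 : p ≤ 1) (hμ : 0 < μ) :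
    ∃ C c : ℝ, 0 < c ∧ c < C ∧ ∃ t₀ : ℝ, 1 ≤ t₀ ∧
      ∃ N₀ : ℕ, 1 ≤ N₀ ∧ ∀ (N K : ℕ), N₀ ≤ N → 1 ≤ K → K ≤ N →
      ∀ A : Matrix (Fin N) (Fin N) ℝ,
        (∀ i j, A i j = 0 ∨ A i j = 1 / N) →
        (p / 2 < (∑ i, ∑ j, A i j) / N) →
        (∀ i j, |(N : ℝ) * (A * A) i j - p ^ 2| < p ^ 2 / (2 * (N : ℝ) ^ ((3 : ℝ) / 8))) →
        (p / 2 < (∑ i ∈ Finset.univ.filter (fun i : Fin N => (i : ℕ) < K), ∑ j, A i j) / K) →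
        ∀ (ρ : ℝ) (V : Fin N → ℝ),
          p * (1 - 1 / (2 * (N : ℝ) ^ ((3 : ℝ) / 8))) ≤ ρ →
          ρ ≤ p * (1 + 1 / (2 * (N : ℝ) ^ ((3 : ℝ) / 8))) →
          A.mulVec V = ρ • V →
          (∀ i, 0 < V i) →
          Real.sqrt (∑ i, V i ^ 2) = Real.sqrt N →
          ∀ t : ℝ, t₀ ≤ t →
            c * Real.exp ((ρ - b) * t) ≤ vt K μ b A V t ∧
            vt K μ b A V t ≤ C * Real.exp ((ρ - b) * t) := by
  have hp0 : 0 < p := hb.trans hbp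
  have hpb : 0 < p - b := by linarith
  set a₁ : ℝ := (p - b) / 2 with ha₁def
  have ha₁ : 0 < a₁ := by positivity
  set ε : ℝ := min (1/100) ((p - b) / 2) with hεdef
  have hε : 0 < ε := lt_min (by norm_num) (by positivity)
  set cc : ℝ := μ * p * Real.exp (-2) / 16 with hccdef
  set CC : ℝ := μ * (4 / a₁ + 16 / a₁ ^ 2) + cc + 1 with hCCdef
  have hcc : 0 < cc := by positivity
  have hCgt : cc < CC := by
    have h : 0 < μ * (4 / a₁ + 16 / a₁ ^ 2) := by positivity
    simp only [hCCdef]; linarith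
  refine ⟨CC, cc, hcc, hCgt, 1, le_refl 1, ⌈(1/(2*ε))^((8:ℝ)/3)⌉₊ + 1, by omega, ?_⟩
  intro N K hN hK1 hKN A hA01 _hA1 hA2 _hA3 ρ V hρ1 hρ2 hAV hVpos hVnorm t ht
  have hN0 : 0 < N := by omega
  have hNpos : (0:ℝ) < N := by exact_mod_cast hN0
  have hN1 : (1:ℝ) ≤ (N:ℝ) := by exact_mod_cast hN0
  set X : ℝ := (N:ℝ) ^ ((3:ℝ)/8) with hXdef
  have hX1 : (1:ℝ) ≤ X := by
    rw [hXdef, show (1:ℝ) = (1:ℝ) ^ ((3:ℝ)/8) from (Real.one_rpow _).symm]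
    exact Real.rpow_le_rpow (by norm_num) hN1 (by norm_num)
  have hX0 : 0 < X := by linarith
  set δ : ℝ := 1 / (2 * X) with hδdef
  have hδ0 : 0 < δ := by positivity
  have hδε : δ ≤ ε := by
    have h1 : ((1/(2*ε))^((8:ℝ)/3) : ℝ) ≤ (N : ℝ) := by
      calc ((1/(2*ε))^((8:ℝ)/3) : ℝ) ≤ (⌈(1/(2*ε))^((8:ℝ)/3)⌉₊ : ℝ) := Nat.le_ceil _
        _ ≤ (N:ℝ) := by
            have h0 : (⌈(1/(2*ε))^((8:ℝ)/3)⌉₊ : ℕ) ≤ N := by omega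
            exact_mod_cast h0
    have h2 : 1/(2*ε) ≤ X := by
      have h3 := Real.rpow_le_rpow (by positivity) h1 (by norm_num : (0:ℝ) ≤ 3/8)
      rw [← Real.rpow_mul (by positivity)] at h3
      have he : ((8:ℝ)/3) * (3/8) = 1 := by norm_num
      rw [he, Real.rpow_one] at h3
      exact h3
    rw [hδdef, div_le_iff₀ (by positivity)]
    have h4 : 1 ≤ X * (2 * ε) := by
      rw [div_le_iff₀ (by positivity)] at h2
      linarith
    linarith
  have hδ100 : δ ≤ 1/100 := hδε.trans (min_le_left _ _)
  have hδpb : δ ≤ (p - b)/2 := hδε.trans (min_le_right _ _)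
  have hρl : p * (1 - δ) ≤ ρ := hρ1
  have hρu : ρ ≤ p * (1 + δ) := hρ2
  have hρ0 : 0 < ρ :=
    lt_of_lt_of_le (mul_pos hp0 (by linarith : (0:ℝ) < 1 - δ)) hρl
  have hρp2 : p/2 ≤ ρ := by
    refine le_trans ?_ hρl
    nlinarith [mul_nonneg hp0.le (by linarith : (0:ℝ) ≤ 1/2 - δ)]
  have hρ2' : ρ ≤ 2 := by
    refine le_trans hρu ?_
    nlinarith [mul_le_mul_of_nonneg_right hp1 hδ0.le]
  have hα1 : a₁ ≤ ρ - b := by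
    simp only [ha₁def]
    nlinarith [hρl, hδpb, mul_le_mul_of_nonneg_right hp1 hδ0.le]
  have hα2 : ρ - b ≤ 2 := by linarith
  -- (A²) entry bounds
  have hAA : ∀ i j, p^2*(1-δ)/(N:ℝ) ≤ (A*A) i j ∧ (A*A) i j ≤ p^2*(1+δ)/(N:ℝ) := by
    intro i j
    have h := hA2 i j
    have hNX : p^2 / (2*X) = p^2 * δ := by rw [hδdef]; ring
    rw [hNX, abs_lt] at h
    constructor
    · rw [div_le_iff₀ hNpos]; linarith only [h.1]
    · rw [le_div_iff₀ hNpos]; linarith only [h.2]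
  have hAAV : (A*A).mulVec V = (ρ*ρ) • V := by
    rw [← Matrix.mulVec_mulVec, hAV, Matrix.mulVec_smul, hAV, smul_smul]
  set S : ℝ := ∑ j, V j with hSdef
  have hS0 : 0 < S :=
    Finset.sum_pos (fun j _ => hVpos j) ⟨⟨0, hN0⟩, Finset.mem_univ _⟩
  set m : ℝ := S / N with hmdef
  have hm0 : 0 < m := by positivity
  have hVm : ∀ i, (3/4) * m ≤ V i ∧ V i ≤ (4/3) * m := by
    intro i
    have heq : ∑ j, (A*A) i j * V j = (ρ*ρ) * V i := by
      have h := congrFun hAAV i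
      simpa [Matrix.mulVec, dotProduct, smul_eq_mul] using h
    have hsum_ub : ∑ j, (A*A) i j * V j ≤ p^2*(1+δ) * m := by
      calc ∑ j, (A*A) i j * V j ≤ ∑ j, p^2*(1+δ)/(N:ℝ) * V j :=
          Finset.sum_le_sum fun j _ => mul_le_mul_of_nonneg_right (hAA i j).2 (hVpos j).le
        _ = p^2*(1+δ) * m := by
            rw [← Finset.mul_sum, ← hSdef, hmdef]; ring
    have hsum_lb : p^2*(1-δ) * m ≤ ∑ j, (A*A) i j * V j := by
      calc p^2*(1-δ) * m = ∑ j, p^2*(1-δ)/(N:ℝ) * V j := by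
            rw [← Finset.mul_sum, ← hSdef, hmdef]; ring
        _ ≤ ∑ j, (A*A) i j * V j :=
          Finset.sum_le_sum fun j _ => mul_le_mul_of_nonneg_right (hAA i j).1 (hVpos j).le
    have hup : (ρ*ρ) * V i ≤ p^2*(1+δ) * m := by rw [← heq]; exact hsum_ub
    have hlo : p^2*(1-δ) * m ≤ (ρ*ρ) * V i := by rw [← heq]; exact hsum_lb
    exact aux_Vratio p δ ρ m (V i) hp0 hδ0 hδ100 hρl hρu hρ0 hm0 (hVpos i) hup hlo
  have hsq : ∑ i, V i ^ 2 = (N:ℝ) := by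
    have h1 : Real.sqrt (∑ i, V i ^ 2) ^ 2 = Real.sqrt (N:ℝ) ^ 2 := by rw [hVnorm]
    rwa [Real.sq_sqrt (Finset.sum_nonneg fun i _ => sq_nonneg (V i)),
      Real.sq_sqrt hNpos.le] at h1
  have hm34 : 3/4 ≤ m := by
    apply aux_m_lb (N:ℝ) m hNpos hm0
    have h1 : (N:ℝ) ≤ ∑ _i : Fin N, ((4/3)*m)^2 := by
      rw [← hsq]
      exact Finset.sum_le_sum fun i _ => pow_le_pow_left₀ (hVpos i).le (hVm i).2 2
    have h2 : ∑ _i : Fin N, ((4/3)*m)^2 = (N:ℝ) * ((4/3)*m)^2 := by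
      rw [Finset.sum_const, Finset.card_univ, Fintype.card_fin, nsmul_eq_mul]
    rw [h2] at h1
    exact h1
  have hm43 : m ≤ 4/3 := by
    apply aux_m_ub (N:ℝ) m hNpos hm0
    have h1 : ∑ _i : Fin N, ((3/4)*m)^2 ≤ (N:ℝ) := by
      rw [← hsq]
      exact Finset.sum_le_sum fun i _ => pow_le_pow_left₀ (by positivity) (hVm i).1 2
    have h2 : ∑ _i : Fin N, ((3/4)*m)^2 = (N:ℝ) * ((3/4)*m)^2 := by
      rw [Finset.sum_const, Finset.card_univ, Fintype.card_fin, nsmul_eq_mul]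
    rw [h2] at h1
    exact h1
  have hVlb : ∀ i, 1/2 ≤ V i := fun i => by linarith only [(hVm i).1, hm34]
  have hVub : ∀ i, V i ≤ 2 := fun i => by linarith only [(hVm i).2, hm43, hm0]
  -- normVK bounds
  set W : Fin N → ℝ := fun i : Fin N => if (i:ℕ) < K then V i else 0 with hWdef
  have hnormW : normVK K V = euclNorm W := rfl
  have hW0 : ∀ i, 0 ≤ W i := by
    intro i; simp only [hWdef]
    split
    · exact (hVpos i).le
    · exact le_refl 0
  have hcard := aux_card_filter_lt N K hKN
  have hWsum_eq : ∑ i, W i ^ 2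
      = ∑ i ∈ Finset.univ.filter (fun i : Fin N => (i:ℕ) < K), V i ^ 2 := by
    rw [Finset.sum_filter]
    apply Finset.sum_congr rfl
    intro i _
    simp only [hWdef]
    split <;> simp
  have hK1' : (1:ℝ) ≤ (K:ℝ) := by exact_mod_cast hK1
  have hWlb : (K:ℝ) * (1/4) ≤ ∑ i, W i ^ 2 := by
    rw [hWsum_eq]
    calc (K:ℝ)*(1/4)
        = ∑ _i ∈ Finset.univ.filter (fun i : Fin N => (i:ℕ) < K), (1/4:ℝ) := by
          rw [Finset.sum_const, hcard, nsmul_eq_mul]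
      _ ≤ _ := Finset.sum_le_sum fun i _ => aux_sq_lb (V i) (hVlb i)
  have hnpos : 0 < normVK K V := by
    rw [hnormW]
    have : 0 < ∑ i, W i ^ 2 := by linarith only [hWlb, hK1']
    exact Real.sqrt_pos.mpr this
  have hnormsq : (normVK K V)^2 = ∑ i, W i ^ 2 := by
    rw [hnormW]
    exact Real.sq_sqrt (Finset.sum_nonneg fun i _ => sq_nonneg _)
  have hsqrtK : Real.sqrt K ≤ 2 * normVK K V := by
    have h1 : (K:ℝ) ≤ (2 * normVK K V)^2 := by linarith only [hWlb, hnormsq]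
    calc Real.sqrt K ≤ Real.sqrt ((2*normVK K V)^2) := Real.sqrt_le_sqrt h1
      _ = 2*normVK K V := Real.sqrt_sq (by linarith [hnpos])
  -- matrix power bounds
  have hAnn : ∀ i j, 0 ≤ A i j := by
    intro i j; rcases hA01 i j with h | h
    · rw [h]
    · rw [h]; positivity
  have hr : ∀ n : ℕ,
      (1/2) * ρ^(n+1)
        ≤ euclNorm ((projK N K * A ^ (n+1)).mulVec fun _ => (1:ℝ)) / normVK K V ∧
      euclNorm ((projK N K * A ^ (n+1)).mulVec fun _ => (1:ℝ)) / normVK K V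
        ≤ 2 * ρ^(n+1) := by
    intro n
    have hpw := aux_pow_entry_nonneg A hAnn (n+1) (by omega)
    have heig := aux_mulVec_pow_eigen A V ρ hAV (n+1)
    have hρn : (0:ℝ) ≤ ρ^(n+1) := pow_nonneg hρ0.le _
    have hudef : (projK N K * A ^ (n+1)).mulVec (fun _ => (1:ℝ))
        = fun i : Fin N => if (i:ℕ) < K then ((A ^ (n+1)).mulVec fun _ => (1:ℝ)) i else 0 := by
      rw [← Matrix.mulVec_mulVec, aux_projK_mulVec]
    have hBub : ∀ i, ((A ^ (n+1)).mulVec fun _ => (1:ℝ)) i ≤ 2 * ρ^(n+1) * V i := by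
      intro i
      have h1 := aux_mulVec_mono (A ^ (n+1)) hpw (fun _ => (1:ℝ)) (fun j => 2 * V j)
        (fun j => by show (1:ℝ) ≤ 2 * V j; linarith only [hVlb j]) i
      have h2 : (A ^ (n+1)).mulVec (fun j => 2 * V j) = fun j => 2 * ρ^(n+1) * V j := by
        have h3 : (fun j : Fin N => 2 * V j) = (2:ℝ) • V := by
          funext j; simp [smul_eq_mul]
        rw [h3, Matrix.mulVec_smul, heig]
        funext j; simp [smul_eq_mul]; ring
      rw [h2] at h1; exact h1
    have hBlb : ∀ i, (1/2) * ρ^(n+1) * V i ≤ ((A ^ (n+1)).mulVec fun _ => (1:ℝ)) i := by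
      intro i
      have h1 := aux_mulVec_mono (A ^ (n+1)) hpw (fun j => (1/2) * V j) (fun _ => (1:ℝ))
        (fun j => by show (1/2:ℝ) * V j ≤ 1; linarith only [hVub j]) i
      have h2 : (A ^ (n+1)).mulVec (fun j => (1/2) * V j)
          = fun j => (1/2) * ρ^(n+1) * V j := by
        have h3 : (fun j : Fin N => (1/2:ℝ) * V j) = ((1/2:ℝ)) • V := by
          funext j; simp [smul_eq_mul]
        rw [h3, Matrix.mulVec_smul, heig]
        funext j; simp [smul_eq_mul]; ring
      rw [h2] at h1; exact h1
    have hBnn : ∀ i, 0 ≤ ((A ^ (n+1)).mulVec fun _ => (1:ℝ)) i := by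
      intro i
      refine le_trans ?_ (hBlb i)
      have := hVpos i
      positivity
    have hWVub : euclNorm ((projK N K * A ^ (n+1)).mulVec fun _ => (1:ℝ))
        ≤ 2 * ρ^(n+1) * normVK K V := by
      rw [hudef, hnormW]
      have h1 := aux_euclNorm_mono
        (fun i : Fin N => if (i:ℕ) < K then ((A ^ (n+1)).mulVec fun _ => (1:ℝ)) i else 0)
        (fun i => (2 * ρ^(n+1)) * W i)
        (fun i => by
          show (0:ℝ) ≤ if (i:ℕ) < K then ((A ^ (n+1)).mulVec fun _ => (1:ℝ)) i else 0
          split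
          · exact hBnn _
          · exact le_refl 0)
        (fun i => by
          by_cases hi : (i:ℕ) < K
          · simp only [if_pos hi, hWdef]
            exact hBub i
          · simp [if_neg hi, hWdef])
      rwa [aux_euclNorm_smul (2 * ρ^(n+1)) (by positivity) W] at h1
    have hWVlb : (1/2) * ρ^(n+1) * normVK K V
        ≤ euclNorm ((projK N K * A ^ (n+1)).mulVec fun _ => (1:ℝ)) := by
      rw [hudef, hnormW]
      have h1 := aux_euclNorm_mono
        (fun i => ((1/2) * ρ^(n+1)) * W i)
        (fun i : Fin N => if (i:ℕ) < K then ((A ^ (n+1)).mulVec fun _ => (1:ℝ)) i else 0)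
        (fun i => mul_nonneg (by positivity) (hW0 i))
        (fun i => by
          by_cases hi : (i:ℕ) < K
          · simp only [if_pos hi, hWdef]
            exact hBlb i
          · simp [if_neg hi, hWdef])
      rwa [aux_euclNorm_smul ((1/2) * ρ^(n+1)) (by positivity) W] at h1
    constructor
    · rw [le_div_iff₀ hnpos]; exact hWVlb
    · rw [div_le_iff₀ hnpos]; exact hWVub
  -- final assembly
  have ht0 : (0:ℝ) ≤ t := by linarith
  have hT1l : 0 ≤ Real.sqrt K / normVK K V * t :=
    mul_nonneg (div_nonneg (Real.sqrt_nonneg _) hnpos.le) ht0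
  have hT1u : Real.sqrt K / normVK K V * t ≤ 2 * t :=
    mul_le_mul_of_nonneg_right ((div_le_iff₀ hnpos).mpr hsqrtK) ht0
  have hres := aux_assemble μ p a₁ ρ b t (Real.sqrt K / normVK K V * t)
    (fun n => euclNorm ((projK N K * A ^ (n + 1)).mulVec fun _ => (1 : ℝ)) / normVK K V)
    (fun n => ∫ s in (0:ℝ)..t, s * ((t - s) ^ n * Real.exp (-(b * (t - s))) / (n.factorial : ℝ)))
    hμ ha₁ hρ0 hρp2 hρ2' hα1 hα2 ht hT1l hT1u
    (fun n => aux_I_nonneg b t ht0 n)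
    (fun n => aux_I_le b t hb.le ht0 n)
    (fun n => hr n)
    (aux_key_interchange ρ b t hρ0.le hb.le ht0)
  constructor
  · exact hres.1
  · refine le_trans hres.2 (mul_le_mul_of_nonneg_right ?_ (Real.exp_pos _).le)
    simp only [hCCdef]
    linarith [hcc]
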